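/- Let F ⊆ ℝ be closed and let C₁, C₂ ⊆ ℝ be countable. Then the set (F \ C₁) ∪ C₂ is either countable or admits an injection from ℝ into it. -/

import Mathlib

open Cardinal

lemma mk_nat_bool_eq : #(ℕ → Bool) = Cardinal.continuum := by
  rw [Cardinal.mk_arrow]
  simp [Cardinal.two_power_aleph0]

/-- For a closed `F ⊆ ℝ` and countable `C₁ C₂ ⊆ ℝ`, the set `(F \ C₁) ∪ C₂`
is either countable or admits an injection from `ℝ` into it. -/
theorem diff_union_countable_or_continuum (F C₁ C₂ : Set ℝ)
    (hF : IsClosed F) (hC₁ : C₁.Countable) (hC₂ : C₂.Countable) :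
    ((F \ C₁) ∪ C₂).Countable ∨ ∃ f : ℝ → ((F \ C₁) ∪ C₂ : Set ℝ), Function.Injective f := by
  by_cases hFc : F.Countable
  · exact Or.inl (((hFc.mono Set.diff_subset).union hC₂))
  · right
    obtain ⟨g, hg, _, hginj⟩ := hF.exists_nat_bool_injection_of_not_countable hFc
    set s := Set.range g \ C₁ with hs
    have hsub : s ⊆ (F \ C₁) ∪ C₂ := fun x hx => Or.inl ⟨hg hx.1, hx.2⟩
    have hcover : Set.range g ⊆ s ∪ C₁ := by
      intro x hx
      by_cases hxc : x ∈ C₁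
      · exact Or.inr hxc
      · exact Or.inl ⟨hx, hxc⟩
    have hrange : #(Set.range g) = Cardinal.continuum := by
      rw [Cardinal.mk_range_eq g hginj, mk_nat_bool_eq]
    have hle : Cardinal.continuum ≤ #s := by
      have h1 : Cardinal.continuum ≤ #(↥(s ∪ C₁)) := by
        rw [← hrange]; exact Cardinal.mk_le_mk_of_subset hcover
      have h4 : Cardinal.continuum ≤ #s + ℵ₀ :=
        h1.trans ((Cardinal.mk_union_le s C₁).trans (add_le_add_right hC₁.le_aleph0 _))
      have h5 : ℵ₀ ≤ #s := by
        by_contra h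
        push_neg at h
        have hsc : s.Countable := Set.countable_coe_iff.mp (Cardinal.mk_le_aleph0_iff.mp h.le)
        have : (Set.range g).Countable := (hsc.union hC₁).mono hcover
        have : #(Set.range g) ≤ ℵ₀ := this.le_aleph0
        rw [hrange] at this
        exact absurd this (not_le.mpr Cardinal.aleph0_lt_continuum)
      calc Cardinal.continuum ≤ #s + ℵ₀ := h4
        _ = #s := by rw [Cardinal.add_eq_max h5, max_eq_left h5]
    have hR : #ℝ ≤ #(↥((F \ C₁) ∪ C₂)) := by
      calc #ℝ = Cardinal.continuum := Cardinal.mk_real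
        _ ≤ #s := hle
        _ ≤ #(↥((F \ C₁) ∪ C₂)) := Cardinal.mk_le_mk_of_subset hsub
    obtain ⟨f⟩ := hR
    exact ⟨f, f.injective⟩
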